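/- Second derivative Van der Corput lemma: let f be a real twice-differentiable function and g a real continuous function on [a,b] such that f'(x)/g(x) is monotone. If |f''(x)| ≥ Y > 0 and 0 < |g(x)| ≤ N on [a,b], then |∫_a^b g(x) e^{i f(x)} dx| ≤ C·N/√Y for an absolute constant C independent of f and g. -/

import Mathlib

open Complex Set

section VdCAux

open MeasureTheory intervalIntegral Finset


lemma ii_ofReal {f : ℝ → ℝ} {a b : ℝ} (hf : IntervalIntegrable f volume a b) :
    IntervalIntegrable (fun x => (f x : ℂ)) volume a b :=
  ⟨hf.1.ofReal, hf.2.ofReal⟩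

lemma abel_bound {a b : ℝ} (hab : a ≤ b) {φ : ℝ → ℝ} {h : ℝ → ℂ}
    (hφ : MonotoneOn φ (Icc a b)) (hh : ContinuousOn h (Icc a b))
    {M : ℝ} (hM : ∀ x ∈ Icc a b, ‖∫ t in a..x, h t‖ ≤ M) :
    ‖∫ x in a..b, (φ x : ℂ) * h x‖ ≤ M * (|φ a| + |φ b| + (φ b - φ a)) := by
  obtain ⟨K0, hK0⟩ := isCompact_Icc.exists_bound_of_continuousOn hh
  set K := max K0 0 with hKdef
  have hK : ∀ x ∈ Icc a b, ‖h x‖ ≤ K := fun x hx => (hK0 x hx).trans (le_max_left _ _)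
  have hKnn : 0 ≤ K := le_max_right _ _
  have hMnn : 0 ≤ M := by simpa using hM a ⟨le_refl a, hab⟩
  have hφab : φ a ≤ φ b := hφ ⟨le_refl a, hab⟩ ⟨hab, le_refl b⟩ hab
  -- integrability on subintervals
  have hint : ∀ c ∈ Icc a b, ∀ d ∈ Icc a b,
      IntervalIntegrable (fun x => (φ x : ℂ) * h x) volume c d := by
    intro c hc d hd
    have hsub : uIcc c d ⊆ Icc a b := uIcc_subset_Icc hc hd
    exact (ii_ofReal (hφ.mono hsub).intervalIntegrable).mul_continuousOn (hh.mono hsub)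
  have hinth : ∀ c ∈ Icc a b, ∀ d ∈ Icc a b, IntervalIntegrable h volume c d := by
    intro c hc d hd
    exact (hh.mono (uIcc_subset_Icc hc hd)).intervalIntegrable
  refine le_of_forall_pos_le_add ?_
  intro ε hε
  obtain ⟨n0, hn0⟩ := exists_nat_gt (K * (φ b - φ a) * (b - a) / ε)
  set n := max n0 1 with hn
  have hn1 : 1 ≤ n := le_max_right _ _
  have hnpos : (0:ℝ) < n := by positivity
  set δ := (b - a) / n with hδ
  have hδnn : 0 ≤ δ := div_nonneg (by linarith) hnpos.le
  set x : ℕ → ℝ := fun k => a + k * δ with hxdef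
  have hx0 : x 0 = a := by simp [hxdef]
  have hxn : x n = b := by
    simp only [hxdef, hδ]
    field_simp
    ring
  have hxmono : ∀ k : ℕ, x k ≤ x (k + 1) := by
    intro k
    simp only [hxdef]
    have : (k:ℝ) * δ ≤ (k+1:ℕ) * δ := by
      apply mul_le_mul_of_nonneg_right _ hδnn
      exact_mod_cast Nat.le_succ k
    linarith
  have hxmem : ∀ k ≤ n, x k ∈ Icc a b := by
    intro k hk
    constructor
    · simp only [hxdef]; nlinarith [mul_nonneg (Nat.cast_nonneg (α := ℝ) k) hδnn]
    · have : x k ≤ x n := by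
        simp only [hxdef]
        apply (add_le_add_iff_left a).mpr
        exact mul_le_mul_of_nonneg_right (by exact_mod_cast hk) hδnn
      rw [hxn] at this; exact this
  set H : ℝ → ℂ := fun t => ∫ s in a..t, h s with hHdef
  have hHbound : ∀ t ∈ Icc a b, ‖H t‖ ≤ M := hM
  set g : ℕ → ℂ := fun i => ∫ t in x i..x (i+1), h t with hgdef
  have hGsum : ∀ m ≤ n, ∑ i ∈ range m, g i = H (x m) := by
    intro m hm
    have := intervalIntegral.sum_integral_adjacent_intervals (a := x) (n := m)
      (f := h) (μ := volume) (fun k hk => hinth _ (hxmem k (le_trans hk.le hm))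
        _ (hxmem (k+1) (by omega)))
    rw [hgdef, this, hx0, hHdef]
  -- Abel summation bound for S
  set S : ℂ := ∑ i ∈ range n, φ (x i) • g i with hSdef
  have hSbound : ‖S‖ ≤ M * (|φ a| + |φ b| + (φ b - φ a)) := by
    rw [hSdef, Finset.sum_range_by_parts]
    have h1 : ‖φ (x (n-1)) • ∑ i ∈ range n, g i‖ ≤ (|φ a| + |φ b|) * M := by
      rw [hGsum n le_rfl, norm_smul, hxn]
      have hxm : x (n-1) ∈ Icc a b := hxmem _ (Nat.sub_le _ _)
      have l1 : φ a ≤ φ (x (n-1)) := hφ ⟨le_refl a, hab⟩ hxm hxm.1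
      have l2 : φ (x (n-1)) ≤ φ b := hφ hxm ⟨hab, le_refl b⟩ hxm.2
      have : ‖φ (x (n-1))‖ ≤ |φ a| + |φ b| := by
        rw [Real.norm_eq_abs, abs_le]
        constructor
        · have := neg_abs_le (φ a); have := abs_nonneg (φ b); linarith
        · have := le_abs_self (φ b); have := abs_nonneg (φ a); linarith
      exact mul_le_mul this (hM b ⟨hab, le_refl b⟩) (norm_nonneg _)
        (by positivity)
    have h2 : ‖∑ i ∈ range (n-1), (φ (x (i+1)) - φ (x i)) • ∑ j ∈ range (i+1), g j‖
        ≤ (φ b - φ a) * M := by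
      refine le_trans (norm_sum_le _ _) ?_
      have hterm : ∀ i ∈ range (n-1),
          ‖(φ (x (i+1)) - φ (x i)) • ∑ j ∈ range (i+1), g j‖
            ≤ (φ (x (i+1)) - φ (x i)) * M := by
        intro i hi
        rw [Finset.mem_range] at hi
        rw [hGsum (i+1) (by omega), norm_smul, Real.norm_eq_abs]
        have hle : φ (x i) ≤ φ (x (i+1)) :=
          hφ (hxmem i (by omega)) (hxmem (i+1) (by omega)) (hxmono i)
        rw [_root_.abs_of_nonneg (by linarith)]
        exact mul_le_mul_of_nonneg_left (hHbound _ (hxmem (i+1) (by omega))) (by linarith)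
      refine le_trans (Finset.sum_le_sum hterm) ?_
      rw [← Finset.sum_mul]
      have : ∑ i ∈ range (n-1), (φ (x (i+1)) - φ (x i)) = φ (x (n-1)) - φ (x 0) :=
        Finset.sum_range_sub (fun i => φ (x i)) (n-1)
      rw [this, hx0]
      apply mul_le_mul_of_nonneg_right _ hMnn
      have hxm : x (n-1) ∈ Icc a b := hxmem _ (Nat.sub_le _ _)
      have := hφ hxm ⟨hab, le_refl b⟩ hxm.2
      linarith
    calc ‖_ - _‖ ≤ _ := norm_sub_le _ _
      _ ≤ (|φ a| + |φ b|) * M + (φ b - φ a) * M := add_le_add h1 h2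
      _ = M * (|φ a| + |φ b| + (φ b - φ a)) := by ring
  -- main integral vs S
  have hsplit : ∫ t in a..b, (φ t : ℂ) * h t
      = ∑ k ∈ range n, ∫ t in x k..x (k+1), (φ t : ℂ) * h t := by
    have := intervalIntegral.sum_integral_adjacent_intervals (a := x) (n := n)
      (f := fun t => (φ t : ℂ) * h t) (μ := volume)
      (fun k hk => hint _ (hxmem k hk.le) _ (hxmem (k+1) hk))
    rw [hx0, hxn] at this
    exact this.symm
  have hdiff : ‖(∫ t in a..b, (φ t : ℂ) * h t) - S‖ ≤ K * (φ b - φ a) * δ := by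
    rw [hsplit, hSdef, ← Finset.sum_sub_distrib]
    refine le_trans (norm_sum_le _ _) ?_
    have hterm : ∀ k ∈ range n,
        ‖(∫ t in x k..x (k+1), (φ t : ℂ) * h t) - φ (x k) • g k‖
          ≤ (φ (x (k+1)) - φ (x k)) * K * δ := by
      intro k hk
      rw [Finset.mem_range] at hk
      have hk1 : x k ∈ Icc a b := hxmem k hk.le
      have hk2 : x (k+1) ∈ Icc a b := hxmem (k+1) hk
      have hiih : IntervalIntegrable h volume (x k) (x (k+1)) := hinth _ hk1 _ hk2
      have heq : φ (x k) • g k = ∫ t in x k..x (k+1), (φ (x k) : ℂ) * h t := by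
        simp only [hgdef]
        rw [← intervalIntegral.integral_smul]
        norm_num [Complex.real_smul]
      rw [heq, ← intervalIntegral.integral_sub (hint _ hk1 _ hk2)
        (hiih.const_mul _)]
      have hbnd : ∀ t ∈ Set.uIoc (x k) (x (k+1)),
          ‖(φ t : ℂ) * h t - (φ (x k) : ℂ) * h t‖ ≤ (φ (x (k+1)) - φ (x k)) * K := by
        intro t ht
        rw [uIoc_of_le (hxmono k)] at ht
        have htm : t ∈ Icc a b := ⟨le_trans hk1.1 ht.1.le, le_trans ht.2 hk2.2⟩
        rw [← sub_mul, norm_mul]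
        have h1 : ‖(φ t : ℂ) - (φ (x k) : ℂ)‖ ≤ φ (x (k+1)) - φ (x k) := by
          rw [← Complex.ofReal_sub, Complex.norm_real, Real.norm_eq_abs]
          have l1 : φ (x k) ≤ φ t := hφ hk1 htm ht.1.le
          have l2 : φ t ≤ φ (x (k+1)) := hφ htm hk2 ht.2
          rw [_root_.abs_of_nonneg (by linarith)]; linarith
        exact mul_le_mul h1 (hK t htm) (norm_nonneg _) (by
          have l1 : φ (x k) ≤ φ (x (k+1)) :=
            hφ hk1 hk2 (hxmono k)
          linarith)
      refine le_trans (intervalIntegral.norm_integral_le_of_norm_le_const hbnd) ?_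
      have : |x (k+1) - x k| = δ := by
        simp only [hxdef]
        push_cast
        rw [show a + (k+1) * δ - (a + k * δ) = δ by ring, _root_.abs_of_nonneg hδnn]
      rw [this]
    refine le_trans (Finset.sum_le_sum hterm) ?_
    have : ∑ k ∈ range n, (φ (x (k+1)) - φ (x k)) * K * δ
        = (φ (x n) - φ (x 0)) * K * δ := by
      rw [← Finset.sum_mul, ← Finset.sum_mul, Finset.sum_range_sub (fun i => φ (x i))]
    rw [this, hx0, hxn]; ring_nf; exact le_refl _
  have hδsmall : K * (φ b - φ a) * δ ≤ ε := by
    have hcast : (n0:ℝ) ≤ (n:ℝ) := by exact_mod_cast le_max_left n0 1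
    have h1 : K * (φ b - φ a) * (b - a) / ε < (n:ℝ) := lt_of_lt_of_le hn0 hcast
    rw [div_lt_iff₀ hε] at h1
    have heq : K * (φ b - φ a) * δ = K * (φ b - φ a) * (b - a) / n := by
      rw [hδ]; ring
    rw [heq, div_le_iff₀ hnpos]
    nlinarith
  calc ‖∫ t in a..b, (φ t : ℂ) * h t‖
      ≤ ‖S‖ + ‖(∫ t in a..b, (φ t : ℂ) * h t) - S‖ := by
        have heq : (∫ t in a..b, (φ t : ℂ) * h t) = S + ((∫ t in a..b, (φ t : ℂ) * h t) - S) := by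
          ring
        exact le_trans (le_of_eq (congrArg norm heq)) (norm_add_le _ _)
    _ ≤ M * (|φ a| + |φ b| + (φ b - φ a)) + ε := add_le_add hSbound (le_trans hdiff hδsmall)




lemma abel_bound' {a b : ℝ} (hab : a ≤ b) {φ : ℝ → ℝ} {h : ℝ → ℂ}
    (hφ : MonotoneOn φ (Icc a b) ∨ AntitoneOn φ (Icc a b)) (hh : ContinuousOn h (Icc a b))
    {M P : ℝ} (hM : ∀ x ∈ Icc a b, ‖∫ t in a..x, h t‖ ≤ M)
    (hPa : |φ a| ≤ P) (hPb : |φ b| ≤ P) :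
    ‖∫ x in a..b, (φ x : ℂ) * h x‖ ≤ M * (4 * P) := by
  have hMnn : 0 ≤ M := by simpa using hM a ⟨le_refl a, hab⟩
  rcases hφ with hφ | hφ
  · refine le_trans (abel_bound hab hφ hh hM) ?_
    apply mul_le_mul_of_nonneg_left _ hMnn
    have h1 := le_abs_self (φ b)
    have h2 := neg_abs_le (φ a)
    linarith
  · have hneg : MonotoneOn (fun x => -φ x) (Icc a b) := hφ.neg
    have := abel_bound hab hneg hh hM
    simp only [push_cast, Complex.ofReal_neg, neg_mul] at this
    rw [intervalIntegral.integral_neg, norm_neg] at this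
    refine le_trans this ?_
    apply mul_le_mul_of_nonneg_left _ hMnn
    have h1 := le_abs_self (φ a)
    have h2 := neg_abs_le (φ b)
    rw [abs_neg, abs_neg]
    linarith

lemma lemma43 {a b : ℝ} (hab : a ≤ b) {f f' g : ℝ → ℝ}
    (hf : ∀ x ∈ Icc a b, HasDerivAt f (f' x) x)
    (hf'c : ContinuousOn f' (Icc a b))
    (hmono : MonotoneOn (fun x => g x / f' x) (Icc a b) ∨
      AntitoneOn (fun x => g x / f' x) (Icc a b))
    {P : ℝ} (hP : ∀ x ∈ Icc a b, |g x / f' x| ≤ P)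
    (hf0 : ∀ x ∈ Icc a b, f' x ≠ 0) :
    ‖∫ x in a..b, (g x : ℂ) * Complex.exp (I * f x)‖ ≤ 8 * P := by
  set φ : ℝ → ℝ := fun x => g x / f' x with hφdef
  set h : ℝ → ℂ := fun x => (f' x : ℂ) * Complex.exp (I * f x) with hhdef
  have hfc : ContinuousOn f (Icc a b) := fun x hx => ((hf x hx).continuousAt).continuousWithinAt
  have hh : ContinuousOn h (Icc a b) :=
    (Complex.continuous_ofReal.comp_continuousOn hf'c).mul
      (Complex.continuous_exp.comp_continuousOn
        (continuousOn_const.mul (Complex.continuous_ofReal.comp_continuousOn hfc)))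
  have hFTC : ∀ x ∈ Icc a b, (∫ t in a..x, h t)
      = -I * Complex.exp (I * f x) + I * Complex.exp (I * f a) := by
    intro x hx
    have hsub : uIcc a x ⊆ Icc a b := uIcc_subset_Icc ⟨le_refl a, hab⟩ hx
    have hderiv : ∀ t ∈ uIcc a x, HasDerivAt (fun t => -I * Complex.exp (I * f t)) (h t) t := by
      intro t ht
      have h1 : HasDerivAt (fun t : ℝ => (f t : ℂ)) ((f' t : ℂ)) t :=
        (hf t (hsub ht)).ofReal_comp
      have h2 : HasDerivAt (fun t : ℝ => I * (f t : ℂ)) (I * (f' t : ℂ)) t := h1.const_mul I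
      have h3 := h2.cexp
      have h4 := h3.const_mul (-I)
      refine h4.congr_deriv ?_
      simp only [hhdef]
      ring_nf
      rw [Complex.I_sq]
      ring
    have hint : IntervalIntegrable h volume a x := (hh.mono hsub).intervalIntegrable
    rw [intervalIntegral.integral_eq_sub_of_hasDerivAt hderiv hint]
    ring
  have hM : ∀ x ∈ Icc a b, ‖∫ t in a..x, h t‖ ≤ 2 := by
    intro x hx
    rw [hFTC x hx]
    refine le_trans (norm_add_le _ _) ?_
    have e1 : ‖-I * Complex.exp (I * (f x : ℂ))‖ = 1 := by
      rw [norm_mul]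
      simp [mul_comm I, Complex.norm_exp_ofReal_mul_I]
    have e2 : ‖I * Complex.exp (I * (f a : ℂ))‖ = 1 := by
      rw [norm_mul]
      simp [mul_comm I, Complex.norm_exp_ofReal_mul_I]
    rw [e1, e2]; norm_num
  have heqon : EqOn (fun x => (g x : ℂ) * Complex.exp (I * f x)) (fun x => (φ x : ℂ) * h x)
      (uIcc a b) := by
    intro x hx
    rw [uIcc_of_le hab] at hx
    simp only [hφdef, hhdef]
    rw [Complex.ofReal_div]
    have hne : (f' x : ℂ) ≠ 0 := Complex.ofReal_ne_zero.2 (hf0 x hx)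
    field_simp
  rw [intervalIntegral.integral_congr heqon]
  have := abel_bound' hab hmono hh hM (hP a ⟨le_refl a, hab⟩) (hP b ⟨hab, le_refl b⟩)
  linarith



lemma recip_mono {s : Set ℝ} {ψ : ℝ → ℝ}
    (h : MonotoneOn ψ s ∨ AntitoneOn ψ s)
    (hsgn : (∀ x ∈ s, 0 < ψ x) ∨ (∀ x ∈ s, ψ x < 0)) :
    MonotoneOn (fun x => (ψ x)⁻¹) s ∨ AntitoneOn (fun x => (ψ x)⁻¹) s := by
  have key : ∀ x ∈ s, ∀ y ∈ s, ψ x ≤ ψ y → (ψ y)⁻¹ ≤ (ψ x)⁻¹ := by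
    intro x hx y hy hxy
    rcases hsgn with hs | hs
    · exact one_div (ψ y) ▸ one_div (ψ x) ▸ one_div_le_one_div_of_le (hs x hx) hxy
    · have h1 : 0 < -ψ y := by linarith [hs y hy]
      have h2 : -ψ y ≤ -ψ x := by linarith
      have := one_div_le_one_div_of_le h1 h2
      rw [one_div_neg_eq_neg_one_div, one_div_neg_eq_neg_one_div, neg_le_neg_iff,
        one_div, one_div] at this
      exact this
  rcases h with h | h
  · right; intro x hx y hy hxy; exact key x hx y hy (h hx hy hxy)
  · left; intro x hx y hy hxy; exact key y hy x hx (h hx hy hxy)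

lemma core {a b : ℝ} {f f' f'' g : ℝ → ℝ} {Y N : ℝ} (hab : a ≤ b)
    (hf : ∀ x ∈ Icc a b, HasDerivAt f (f' x) x)
    (hf' : ∀ x ∈ Icc a b, HasDerivAt f' (f'' x) x)
    (hg : ContinuousOn g (Icc a b))
    (hmono : MonotoneOn (fun x => f' x / g x) (Icc a b) ∨
      AntitoneOn (fun x => f' x / g x) (Icc a b))
    (hY : 0 < Y)
    (hf'' : ∀ x ∈ Icc a b, Y ≤ f'' x)
    (hgN : ∀ x ∈ Icc a b, 0 < |g x| ∧ |g x| ≤ N) :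
    ‖∫ x in a..b, (g x : ℂ) * Complex.exp (I * f x)‖ ≤ 18 * N / Real.sqrt Y := by
  set δ := Real.sqrt Y with hδdef
  have hδ : 0 < δ := Real.sqrt_pos.2 hY
  have hδ2 : δ * δ = Y := Real.mul_self_sqrt hY.le
  have hN : 0 < N := lt_of_lt_of_le (hgN a ⟨le_rfl, hab⟩).1 (hgN a ⟨le_rfl, hab⟩).2
  have hf'c : ContinuousOn f' (Icc a b) := fun x hx =>
    ((hf' x hx).continuousAt).continuousWithinAt
  have hfc : ContinuousOn f (Icc a b) := fun x hx =>
    ((hf x hx).continuousAt).continuousWithinAt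
  have hgne : ∀ x ∈ Icc a b, g x ≠ 0 := fun x hx => abs_pos.mp (hgN x hx).1
  -- g has constant sign
  have hgsign : (∀ x ∈ Icc a b, 0 < g x) ∨ (∀ x ∈ Icc a b, g x < 0) := by
    rcases (hgne a ⟨le_rfl, hab⟩).lt_or_gt with hga | hga
    · right; intro x hx
      rcases (hgne x hx).lt_or_gt with h | h
      · exact h
      · exfalso
        have hsub : Icc a x ⊆ Icc a b := Icc_subset_Icc le_rfl hx.2
        have := intermediate_value_Icc hx.1 (hg.mono hsub)
        obtain ⟨z, hz, hz0⟩ := this ⟨hga.le, h.le⟩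
        exact hgne z (hsub hz) hz0
    · left; intro x hx
      rcases (hgne x hx).lt_or_gt with h | h
      · exfalso
        have hsub : Icc a x ⊆ Icc a b := Icc_subset_Icc le_rfl hx.2
        have := intermediate_value_Icc' hx.1 (hg.mono hsub)
        obtain ⟨z, hz, hz0⟩ := this ⟨h.le, hga.le⟩
        exact hgne z (hsub hz) hz0
      · exact h
  -- monotonicity of f' and of f' - Yx
  have hmonf' : MonotoneOn f' (Icc a b) := by
    apply monotoneOn_of_deriv_nonneg (convex_Icc a b) hf'c
    · intro x hx
      rw [interior_Icc] at hx
      exact ((hf' x (Ioo_subset_Icc_self hx)).differentiableAt).differentiableWithinAt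
    · intro x hx
      rw [interior_Icc] at hx
      rw [(hf' x (Ioo_subset_Icc_self hx)).deriv]
      linarith [hf'' x (Ioo_subset_Icc_self hx)]
  have hL : ∀ x ∈ Icc a b, HasDerivAt (fun y => f' y - Y * y) (f'' x - Y) x := by
    intro x hx
    have := (hf' x hx).sub ((hasDerivAt_id x).const_mul Y)
    rw [mul_one] at this
    exact this
  have hmonlin : MonotoneOn (fun y => f' y - Y * y) (Icc a b) := by
    apply monotoneOn_of_deriv_nonneg (convex_Icc a b)
    · exact hf'c.sub ((continuous_const.mul continuous_id).continuousOn)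
    · intro x hx
      rw [interior_Icc] at hx
      exact ((hL x (Ioo_subset_Icc_self hx)).differentiableAt).differentiableWithinAt
    · intro x hx
      rw [interior_Icc] at hx
      rw [(hL x (Ioo_subset_Icc_self hx)).deriv]
      linarith [hf'' x (Ioo_subset_Icc_self hx)]
  -- the splitting points
  set s1 : Set ℝ := insert a {x | x ∈ Icc a b ∧ f' x ≤ -δ} with hs1def
  set s2 : Set ℝ := insert b {x | x ∈ Icc a b ∧ δ ≤ f' x} with hs2def
  have hs1ne : s1.Nonempty := ⟨a, mem_insert _ _⟩
  have hs2ne : s2.Nonempty := ⟨b, mem_insert _ _⟩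
  have hs1bdd : BddAbove s1 := by
    refine ⟨b, ?_⟩
    rintro y (rfl | ⟨hy, _⟩)
    exacts [hab, hy.2]
  have hs2bdd : BddBelow s2 := by
    refine ⟨a, ?_⟩
    rintro y (rfl | ⟨hy, _⟩)
    exacts [hab, hy.1]
  set c₁ := sSup s1 with hc1def
  set c₂ := sInf s2 with hc2def
  have hac1 : a ≤ c₁ := le_csSup hs1bdd (mem_insert _ _)
  have hc2b : c₂ ≤ b := csInf_le hs2bdd (mem_insert _ _)
  have hc1b : c₁ ≤ b := by
    apply csSup_le hs1ne
    rintro y (rfl | ⟨hy, _⟩)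
    exacts [hab, hy.2]
  have hac2 : a ≤ c₂ := by
    apply le_csInf hs2ne
    rintro y (rfl | ⟨hy, _⟩)
    exacts [hab, hy.1]
  have hmem1 : ∀ x ∈ Icc a b, f' x ≤ -δ → x ≤ c₁ := fun x hx h =>
    le_csSup hs1bdd (Or.inr ⟨hx, h⟩)
  have hmem2 : ∀ x ∈ Icc a b, δ ≤ f' x → c₂ ≤ x := fun x hx h =>
    csInf_le hs2bdd (Or.inr ⟨hx, h⟩)
  have hlt1 : ∀ x ∈ Icc a b, x < c₁ → f' x ≤ -δ := by
    intro x hx hlt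
    obtain ⟨y, hy, hxy⟩ := exists_lt_of_lt_csSup hs1ne hlt
    rcases hy with rfl | ⟨hy1, hy2⟩
    · exact absurd hxy (not_lt.2 hx.1)
    · exact le_trans (hmonf' hx hy1 hxy.le) hy2
  have hlt2 : ∀ x ∈ Icc a b, c₂ < x → δ ≤ f' x := by
    intro x hx hlt
    obtain ⟨y, hy, hxy⟩ := exists_lt_of_csInf_lt hs2ne hlt
    rcases hy with rfl | ⟨hy1, hy2⟩
    · exact absurd hxy (not_lt.2 hx.2)
    · exact le_trans hy2 (hmonf' hy1 hx hxy.le)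
  have hgt1 : ∀ x ∈ Icc a b, c₁ < x → -δ < f' x := by
    intro x hx hlt
    by_contra hcon
    push_neg at hcon
    exact absurd (hmem1 x hx hcon) (not_le.2 hlt)
  have hgt2 : ∀ x ∈ Icc a b, x < c₂ → f' x < δ := by
    intro x hx hlt
    by_contra hcon
    push_neg at hcon
    exact absurd (hmem2 x hx hcon) (not_le.2 hlt)
  have hc12 : c₁ ≤ c₂ := by
    by_contra hcon
    push_neg at hcon
    obtain ⟨y, hy, hc2y⟩ := exists_lt_of_lt_csSup hs1ne hcon
    rcases hy with rfl | ⟨hy1, hy2⟩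
    · exact absurd hc2y (not_lt.2 hac2)
    · obtain ⟨z, hz, hzy⟩ := exists_lt_of_csInf_lt hs2ne hc2y
      rcases hz with rfl | ⟨hz1, hz2⟩
      · exact absurd hzy (not_lt.2 hy1.2)
      · have := hmonf' hz1 hy1 hzy.le
        linarith
  have hc1mem : c₁ ∈ Icc a b := ⟨hac1, hc1b⟩
  have hc2mem : c₂ ∈ Icc a b := ⟨hac2, hc2b⟩
  have hc1val : a < c₁ → f' c₁ ≤ -δ := by
    intro h
    have hcont : ContinuousAt f' c₁ := (hf' c₁ hc1mem).continuousAt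
    have htend : Filter.Tendsto f' (nhdsWithin c₁ (Iio c₁)) (nhds (f' c₁)) :=
      hcont.continuousWithinAt.tendsto
    refine le_of_tendsto htend ?_
    filter_upwards [Ioo_mem_nhdsLT h] with x hx
    exact hlt1 x ⟨hx.1.le, hx.2.le.trans hc1b⟩ hx.2
  have hc2val : c₂ < b → δ ≤ f' c₂ := by
    intro h
    have hcont : ContinuousAt f' c₂ := (hf' c₂ hc2mem).continuousAt
    have htend : Filter.Tendsto f' (nhdsWithin c₂ (Ioi c₂)) (nhds (f' c₂)) :=
      hcont.continuousWithinAt.tendsto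
    refine ge_of_tendsto htend ?_
    filter_upwards [Ioo_mem_nhdsGT h] with x hx
    exact hlt2 x ⟨hac2.trans hx.1.le, hx.2.le⟩ hx.1
  have hgap : c₂ - c₁ ≤ 2 * δ / Y := by
    rcases eq_or_lt_of_le hc12 with heq | hlt
    · rw [← heq]
      simp only [sub_self]
      positivity
    · have h1 : -δ ≤ f' c₁ := by
        have hcont : ContinuousAt f' c₁ := (hf' c₁ hc1mem).continuousAt
        have htend : Filter.Tendsto f' (nhdsWithin c₁ (Ioi c₁)) (nhds (f' c₁)) :=
          hcont.continuousWithinAt.tendsto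
        refine ge_of_tendsto htend ?_
        filter_upwards [Ioo_mem_nhdsGT hlt] with x hx
        exact (hgt1 x ⟨hac1.trans hx.1.le, (hx.2.le).trans hc2b⟩ hx.1).le
      have h2 : f' c₂ ≤ δ := by
        have hcont : ContinuousAt f' c₂ := (hf' c₂ hc2mem).continuousAt
        have htend : Filter.Tendsto f' (nhdsWithin c₂ (Iio c₂)) (nhds (f' c₂)) :=
          hcont.continuousWithinAt.tendsto
        refine le_of_tendsto htend ?_
        filter_upwards [Ioo_mem_nhdsLT hlt] with x hx
        exact (hgt2 x ⟨hac1.trans hx.1.le, hx.2.le.trans hc2b⟩ hx.2).le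
      have h3 := hmonlin hc1mem hc2mem hc12
      simp only at h3
      rw [le_div_iff₀ hY]
      nlinarith
  -- integrand continuity
  set F : ℝ → ℂ := fun x => (g x : ℂ) * Complex.exp (I * f x) with hFdef
  have hFc : ContinuousOn F (Icc a b) :=
    (Complex.continuous_ofReal.comp_continuousOn hg).mul
      (Complex.continuous_exp.comp_continuousOn
        (continuousOn_const.mul (Complex.continuous_ofReal.comp_continuousOn hfc)))
  have hFint : ∀ c ∈ Icc a b, ∀ d ∈ Icc a b, IntervalIntegrable F volume c d :=
    fun c hc d hd => (hFc.mono (uIcc_subset_Icc hc hd)).intervalIntegrable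
  -- split
  have hsplit : (∫ x in a..b, F x)
      = (∫ x in a..c₁, F x) + (∫ x in c₁..c₂, F x) + (∫ x in c₂..b, F x) := by
    rw [intervalIntegral.integral_add_adjacent_intervals
        (hFint a ⟨le_rfl, hab⟩ c₁ hc1mem) (hFint c₁ hc1mem c₂ hc2mem),
      intervalIntegral.integral_add_adjacent_intervals
        (hFint a ⟨le_rfl, hab⟩ c₂ hc2mem) (hFint c₂ hc2mem b ⟨hab, le_rfl⟩)]
  -- bound piece 1
  have hI1 : ‖∫ x in a..c₁, F x‖ ≤ 8 * (N / δ) := by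
    rcases eq_or_lt_of_le hac1 with heq | hlt
    · rw [← heq, intervalIntegral.integral_same, norm_zero]
      positivity
    · have hsub : Icc a c₁ ⊆ Icc a b := Icc_subset_Icc le_rfl hc1b
      have hf'neg : ∀ x ∈ Icc a c₁, f' x ≤ -δ := by
        intro x hx
        rcases eq_or_lt_of_le hx.2 with heq2 | hlt2
        · rw [heq2]; exact hc1val hlt
        · exact hlt1 x (hsub hx) hlt2
      have hf'ne : ∀ x ∈ Icc a c₁, f' x ≠ 0 := by
        intro x hx
        have := hf'neg x hx
        intro hcon; rw [hcon] at this; linarith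
      have hψ : MonotoneOn (fun x => f' x / g x) (Icc a c₁) ∨
          AntitoneOn (fun x => f' x / g x) (Icc a c₁) := by
        rcases hmono with h | h
        exacts [Or.inl (h.mono hsub), Or.inr (h.mono hsub)]
      have hψsgn : (∀ x ∈ Icc a c₁, 0 < f' x / g x) ∨
          (∀ x ∈ Icc a c₁, f' x / g x < 0) := by
        rcases hgsign with hgs | hgs
        · right; intro x hx
          exact div_neg_of_neg_of_pos (by linarith [hf'neg x hx]) (hgs x (hsub hx))
        · left; intro x hx
          exact div_pos_of_neg_of_neg (by linarith [hf'neg x hx]) (hgs x (hsub hx))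
      have hζ := recip_mono hψ hψsgn
      have hfun : (fun x => (f' x / g x)⁻¹) = fun x => g x / f' x := by
        funext x; rw [inv_div]
      rw [hfun] at hζ
      have hP : ∀ x ∈ Icc a c₁, |g x / f' x| ≤ N / δ := by
        intro x hx
        rw [abs_div]
        apply div_le_div₀ hN.le (hgN x (hsub hx)).2 hδ
        rw [abs_of_nonpos (by linarith [hf'neg x hx])]
        linarith [hf'neg x hx]
      exact lemma43 hac1 (fun x hx => hf x (hsub hx)) (hf'c.mono hsub) hζ hP hf'ne
  -- bound piece 3
  have hI3 : ‖∫ x in c₂..b, F x‖ ≤ 8 * (N / δ) := by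
    rcases eq_or_lt_of_le hc2b with heq | hlt
    · rw [heq, intervalIntegral.integral_same, norm_zero]
      positivity
    · have hsub : Icc c₂ b ⊆ Icc a b := Icc_subset_Icc hac2 le_rfl
      have hf'pos : ∀ x ∈ Icc c₂ b, δ ≤ f' x := by
        intro x hx
        rcases eq_or_lt_of_le hx.1 with heq2 | hlt2'
        · rw [← heq2]; exact hc2val hlt
        · exact hlt2 x (hsub hx) hlt2'
      have hf'ne : ∀ x ∈ Icc c₂ b, f' x ≠ 0 := by
        intro x hx
        have := hf'pos x hx
        intro hcon; rw [hcon] at this; linarith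
      have hψ : MonotoneOn (fun x => f' x / g x) (Icc c₂ b) ∨
          AntitoneOn (fun x => f' x / g x) (Icc c₂ b) := by
        rcases hmono with h | h
        exacts [Or.inl (h.mono hsub), Or.inr (h.mono hsub)]
      have hψsgn : (∀ x ∈ Icc c₂ b, 0 < f' x / g x) ∨
          (∀ x ∈ Icc c₂ b, f' x / g x < 0) := by
        rcases hgsign with hgs | hgs
        · left; intro x hx
          exact div_pos (by linarith [hf'pos x hx]) (hgs x (hsub hx))
        · right; intro x hx
          exact div_neg_of_pos_of_neg (by linarith [hf'pos x hx]) (hgs x (hsub hx))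
      have hζ := recip_mono hψ hψsgn
      have hfun : (fun x => (f' x / g x)⁻¹) = fun x => g x / f' x := by
        funext x; rw [inv_div]
      rw [hfun] at hζ
      have hP : ∀ x ∈ Icc c₂ b, |g x / f' x| ≤ N / δ := by
        intro x hx
        rw [abs_div]
        apply div_le_div₀ hN.le (hgN x (hsub hx)).2 hδ
        rw [_root_.abs_of_nonneg (by linarith [hf'pos x hx])]
        exact hf'pos x hx
      exact lemma43 hc2b (fun x hx => hf x (hsub hx)) (hf'c.mono hsub) hζ hP hf'ne
  -- bound piece 2
  have hI2 : ‖∫ x in c₁..c₂, F x‖ ≤ N * (2 * δ / Y) := by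
    have hb : ∀ x ∈ Set.uIoc c₁ c₂, ‖F x‖ ≤ N := by
      intro x hx
      rw [uIoc_of_le hc12] at hx
      have hxm : x ∈ Icc a b := ⟨hac1.trans hx.1.le, hx.2.trans hc2b⟩
      rw [hFdef]
      simp only [norm_mul]
      have he : ‖Complex.exp (I * (f x : ℂ))‖ = 1 := by
        simp [mul_comm I, Complex.norm_exp_ofReal_mul_I]
      rw [he, mul_one, Complex.norm_real, Real.norm_eq_abs]
      exact (hgN x hxm).2
    refine le_trans (intervalIntegral.norm_integral_le_of_norm_le_const hb) ?_
    rw [_root_.abs_of_nonneg (by linarith)]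
    exact mul_le_mul_of_nonneg_left hgap hN.le
  -- combine
  rw [hsplit]
  have htotal : 8 * (N / δ) + N * (2 * δ / Y) + 8 * (N / δ) = 18 * N / δ := by
    rw [← hδ2]
    field_simp
    ring
  calc ‖_ + _ + _‖ ≤ ‖(∫ x in a..c₁, F x) + (∫ x in c₁..c₂, F x)‖ + ‖∫ x in c₂..b, F x‖ :=
        norm_add_le _ _
    _ ≤ ‖∫ x in a..c₁, F x‖ + ‖∫ x in c₁..c₂, F x‖ + ‖∫ x in c₂..b, F x‖ := by
        have := norm_add_le (∫ x in a..c₁, F x) (∫ x in c₁..c₂, F x)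
        linarith
    _ ≤ 8 * (N / δ) + N * (2 * δ / Y) + 8 * (N / δ) := by linarith
    _ = 18 * N / δ := htotal



end VdCAux

open MeasureTheory intervalIntegral Finset in
/-- Second-derivative Van der Corput lemma: if `f'/g` is monotone on `[a,b]`,
`|f''(x)| ≥ Y > 0` and `0 < |g(x)| ≤ N` there, then
`|∫_a^b g(x) e^{i f(x)} dx| ≤ C·N/√Y` for an absolute constant `C`. -/
theorem stmt_4 :
    ∃ C : ℝ, 0 < C ∧
      ∀ (a b : ℝ) (f f' f'' g : ℝ → ℝ) (Y N : ℝ),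
        a ≤ b →
        (∀ x ∈ Icc a b, HasDerivAt f (f' x) x) →
        (∀ x ∈ Icc a b, HasDerivAt f' (f'' x) x) →
        ContinuousOn g (Icc a b) →
        (MonotoneOn (fun x => f' x / g x) (Icc a b) ∨
          AntitoneOn (fun x => f' x / g x) (Icc a b)) →
        0 < Y →
        (∀ x ∈ Icc a b, Y ≤ |f'' x|) →
        (∀ x ∈ Icc a b, 0 < |g x| ∧ |g x| ≤ N) →
        ‖∫ x in a..b, (g x : ℂ) * Complex.exp (I * f x)‖ ≤ C * N / Real.sqrt Y := by
  refine ⟨18, by norm_num, ?_⟩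
  intro a b f f' f'' g Y N hab hf hf' hg hmono hY hf'' hgN
  have hf''ne : ∀ x ∈ Icc a b, f'' x ≠ 0 := by
    intro x hx h
    have := hf'' x hx
    rw [h, abs_zero] at this
    linarith
  have hcase : ∀ x ∈ Icc a b, Y ≤ f'' x ∨ f'' x ≤ -Y := by
    intro x hx
    rcases (hf''ne x hx).lt_or_gt with h | h
    · right; have h2 := hf'' x hx; rw [abs_of_neg h] at h2; linarith
    · left; have h2 := hf'' x hx; rw [abs_of_pos h] at h2; linarith
  have hsign : (∀ x ∈ Icc a b, Y ≤ f'' x) ∨ (∀ x ∈ Icc a b, f'' x ≤ -Y) := by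
    by_contra hcon
    push_neg at hcon
    obtain ⟨⟨x, hx, hx2⟩, ⟨y, hy, hy2⟩⟩ := hcon
    have hxneg : f'' x ≤ -Y := (hcase x hx).resolve_left (not_le.2 hx2)
    have hypos : Y ≤ f'' y := by
      rcases hcase y hy with h | h
      · exact h
      · exfalso; linarith
    have hx0 : f'' x < 0 := by linarith
    have hy0 : 0 < f'' y := by linarith
    rcases le_or_gt x y with hxy | hxy
    · have hsub : Icc x y ⊆ Icc a b := Icc_subset_Icc hx.1 hy.2
      have hd : ∀ t ∈ Icc x y, HasDerivWithinAt f' (f'' t) (Icc x y) t :=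
        fun t ht => (hf' t (hsub ht)).hasDerivWithinAt
      obtain ⟨z, hz, hz0⟩ := exists_hasDerivWithinAt_eq_of_gt_of_lt hxy hd hx0 hy0
      exact hf''ne z (hsub (Ioo_subset_Icc_self hz)) hz0
    · have hsub : Icc y x ⊆ Icc a b := Icc_subset_Icc hy.1 hx.2
      have hd : ∀ t ∈ Icc y x, HasDerivWithinAt f' (f'' t) (Icc y x) t :=
        fun t ht => (hf' t (hsub ht)).hasDerivWithinAt
      obtain ⟨z, hz, hz0⟩ := exists_hasDerivWithinAt_eq_of_lt_of_gt (m := 0) hxy.le hd hy0 hx0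
      exact hf''ne z (hsub (Ioo_subset_Icc_self hz)) hz0
  rcases hsign with hpos | hneg
  · have := core hab hf hf' hg hmono hY hpos hgN
    calc ‖∫ x in a..b, (g x : ℂ) * Complex.exp (I * f x)‖
        ≤ 18 * N / Real.sqrt Y := this
      _ = 18 * N / Real.sqrt Y := rfl
  · have h1 : ∀ x ∈ Icc a b, HasDerivAt (fun y => -f y) (-f' x) x := fun x hx => (hf x hx).neg
    have h2 : ∀ x ∈ Icc a b, HasDerivAt (fun y => -f' y) (-f'' x) x := fun x hx => (hf' x hx).neg
    have hmono' : MonotoneOn (fun x => -f' x / g x) (Icc a b) ∨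
        AntitoneOn (fun x => -f' x / g x) (Icc a b) := by
      have hfun : (fun x => -f' x / g x) = fun x => -(f' x / g x) := by
        funext x; rw [neg_div]
      rw [hfun]
      rcases hmono with h | h
      exacts [Or.inr h.neg, Or.inl h.neg]
    have hpos' : ∀ x ∈ Icc a b, Y ≤ -f'' x := fun x hx => by linarith [hneg x hx]
    have hcore := core (f := fun y => -f y) (f' := fun y => -f' y) (f'' := fun y => -f'' y)
      hab h1 h2 hg hmono' hY hpos' hgN
    have hconj : (∫ x in a..b, (g x : ℂ) * Complex.exp (I * ((-f x : ℝ) : ℂ)))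
        = (starRingEnd ℂ) (∫ x in a..b, (g x : ℂ) * Complex.exp (I * f x)) := by
      rw [intervalIntegral.integral_of_le hab, intervalIntegral.integral_of_le hab,
        ← integral_conj]
      refine integral_congr_ae (Filter.Eventually.of_forall fun x => ?_)
      simp only [map_mul, Complex.conj_ofReal, ← Complex.exp_conj, Complex.conj_I]
      push_cast
      ring_nf
    rw [show (∫ x in a..b, (g x : ℂ) * Complex.exp (I * ((fun y => -f y) x : ℝ)))
        = (∫ x in a..b, (g x : ℂ) * Complex.exp (I * ((-f x : ℝ) : ℂ))) from rfl,
      hconj, RCLike.norm_conj] at hcore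
    exact hcore
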